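/- The group of units U of Z₂[i] satisfies U² = {±1} · U^(5), i.e., a unit u ∈ Z₂[i]^× is a square if and only if u ≡ ±1 modulo 𝔪⁵, where 𝔪 = (1+i). -/

import Mathlib

open Polynomial

/-- A model of `ℤ₂[i]`, the ring of integers of `ℚ₂(i)`. -/
noncomputable abbrev Z2i : Type := AdjoinRoot (X ^ 2 + 1 : Polynomial ℤ_[2])

/-- The element `i` of `ℤ₂[i]`. -/
noncomputable abbrev Z2i.i : Z2i := AdjoinRoot.root _

/-- The maximal ideal `𝔪 = (1 + i)` of `ℤ₂[i]`. -/
noncomputable abbrev Z2i.m : Ideal Z2i := Ideal.span {1 + Z2i.i}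

noncomputable abbrev Z2i.of : ℤ_[2] →+* Z2i := AdjoinRoot.of _

lemma Z2i.monic : (X ^ 2 + 1 : Polynomial ℤ_[2]).Monic := by
  have h : ((1:Polynomial ℤ_[2])).degree < 2 := by
    rw [Polynomial.degree_one]; decide
  simpa using Polynomial.monic_X_pow_add h

lemma Z2i.i_sq : Z2i.i ^ 2 = -1 := by
  have h := AdjoinRoot.mk_self (f := (X ^ 2 + 1 : Polynomial ℤ_[2]))
  have h2 : Z2i.i ^ 2 + 1 = 0 := by
    simpa [map_add, map_pow, AdjoinRoot.mk_X, map_one] using h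
  linear_combination h2

lemma Z2i.deg2 : (X ^ 2 + 1 : Polynomial ℤ_[2]).degree = 2 := by
  have := Polynomial.degree_X_pow_add_C (R := ℤ_[2]) (n := 2) (by norm_num) 1
  simpa using this

lemma Z2i.coords (z : Z2i) : ∃ a b : ℤ_[2], z = Z2i.of a + Z2i.of b * Z2i.i := by
  obtain ⟨P, rfl⟩ := AdjoinRoot.mk_surjective z
  set Q := P %ₘ (X ^ 2 + 1) with hQ
  refine ⟨Q.coeff 0, Q.coeff 1, ?_⟩
  have hmod : AdjoinRoot.mk _ P = AdjoinRoot.mk (X ^ 2 + 1) Q := by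
    conv_lhs => rw [← Polynomial.modByMonic_add_div P (X ^ 2 + 1)]
    rw [map_add, map_mul, AdjoinRoot.mk_self, zero_mul, add_zero]
  have hdeg : Q.degree ≤ 1 := by
    have h := Polynomial.degree_modByMonic_lt P Z2i.monic
    rw [Z2i.deg2] at h
    exact Order.le_of_lt_succ h
  have hQeq : Q = C (Q.coeff 1) * X + C (Q.coeff 0) :=
    Polynomial.eq_X_add_C_of_degree_le_one hdeg
  rw [hmod]
  conv_lhs => rw [hQeq]
  simp only [map_add, map_mul, AdjoinRoot.mk_C, AdjoinRoot.mk_X]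
  ring

lemma Z2i.indep {a b : ℤ_[2]} (h : Z2i.of a + Z2i.of b * Z2i.i = 0) : a = 0 ∧ b = 0 := by
  have h' : AdjoinRoot.mk (X ^ 2 + 1 : Polynomial ℤ_[2]) (C b * X + C a) = 0 := by
    rw [map_add, map_mul, AdjoinRoot.mk_C, AdjoinRoot.mk_C, AdjoinRoot.mk_X]
    linear_combination h
  have hdvd := AdjoinRoot.mk_eq_zero.mp h'
  have h0 : (C b * X + C a : Polynomial ℤ_[2]) = 0 := by
    refine Polynomial.eq_zero_of_dvd_of_degree_lt hdvd ?_
    rw [Z2i.deg2]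
    exact lt_of_le_of_lt (Polynomial.degree_linear_le) (by decide)
  constructor
  · have := congrArg (fun p => Polynomial.coeff p 0) h0
    simpa using this
  · have := congrArg (fun p => Polynomial.coeff p 1) h0
    simpa using this
lemma Zp2.parity (x : ℤ_[2]) : (2:ℤ_[2]) ∣ x ∨ (2:ℤ_[2]) ∣ x - 1 := by
  have hmem : ∀ y : ℤ_[2], PadicInt.toZMod y = 0 → (2:ℤ_[2]) ∣ y := by
    intro y hy
    have h : y ∈ RingHom.ker (PadicInt.toZMod (p := 2)) := hy
    rw [PadicInt.ker_toZMod, PadicInt.maximalIdeal_eq_span_p,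
      Ideal.mem_span_singleton] at h
    simpa using h
  have h01 : ∀ z : ZMod 2, z = 0 ∨ z = 1 := by decide
  rcases h01 (PadicInt.toZMod x) with h | h
  · exact Or.inl (hmem x h)
  · exact Or.inr (hmem _ (by rw [map_sub, h, map_one, sub_self]))

lemma Zp2.norm_two : ‖(2:ℤ_[2])‖ = 2⁻¹ := by
  simpa using PadicInt.norm_p (p := 2)

lemma Zp2.two_not_dvd_one : ¬ (2:ℤ_[2]) ∣ 1 := by
  intro h
  have h1 := PadicInt.isUnit_iff.mp (isUnit_of_dvd_one h)
  rw [Zp2.norm_two] at h1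
  norm_num at h1

lemma Zp2.even_helper (x : ℤ_[2]) : ∃ y, x * x + x = 2 * y := by
  rcases Zp2.parity x with ⟨m, hm⟩ | ⟨m, hm⟩
  · exact ⟨2*m*m + m, by linear_combination (x + 2*m + 1) * hm⟩
  · exact ⟨2*m*m + 3*m + 1, by linear_combination (x + 2*m + 2) * hm⟩

lemma Zp2.exists_sqrt (z : ℤ_[2]) (h : (8:ℤ_[2]) ∣ z - 1) :
    ∃ r : ℤ_[2], r * r = z ∧ (4:ℤ_[2]) ∣ r - 1 := by
  have e1 : (X^2 - C z : Polynomial ℤ_[2]).eval 1 = 1 - z := by simp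
  have e2 : (X^2 - C z : Polynomial ℤ_[2]).derivative.eval 1 = 2 := by
    simp [derivative_sub, derivative_X_pow, one_add_one_eq_two]
  have hnorm : ‖(X^2 - C z : Polynomial ℤ_[2]).eval 1‖
      < ‖(X^2 - C z : Polynomial ℤ_[2]).derivative.eval 1‖ ^ 2 := by
    rw [e1, e2, Zp2.norm_two]
    obtain ⟨y, hy⟩ := h
    have h18 : ‖(1:ℤ_[2]) - z‖ ≤ 8⁻¹ := by
      rw [norm_sub_rev]
      rw [hy, norm_mul]
      have h8 : ‖(8:ℤ_[2])‖ = 8⁻¹ := by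
        rw [show (8:ℤ_[2]) = 2*(2*2) by norm_num, norm_mul, norm_mul,
          Zp2.norm_two]
        norm_num
      rw [h8]
      have := PadicInt.norm_le_one y
      have := norm_nonneg y
      nlinarith
    nlinarith
  obtain ⟨r, hroot, hdist, -, -⟩ := hensels_lemma (p := 2) hnorm
  have hrr : r * r = z := by
    have : r^2 - z = 0 := by simpa using hroot
    linear_combination this
  have hr2 : (2:ℤ_[2]) ∣ r - 1 := by
    have hlt : ‖r - 1‖ < 1 := by
      rw [Polynomial.coe_aeval_eq_eval, e2, Zp2.norm_two] at hdist
      exact hdist.trans (by norm_num)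
    simpa using (PadicInt.norm_lt_one_iff_dvd (r - 1)).mp hlt
  obtain ⟨g, hg⟩ := hr2
  rcases Zp2.parity g with ⟨m, hm⟩ | ⟨m, hm⟩
  · exact ⟨r, hrr, m, by linear_combination hg + 2 * hm⟩
  · exact ⟨-r, by linear_combination hrr, -1 - m, by linear_combination -hg - 2 * hm⟩


lemma Z2i.sq_of (z : Z2i) (h : (1 + Z2i.i)^5 ∣ z - 1) : ∃ v : Z2i, v * v = z := by
  have hi := Z2i.i_sq
  obtain ⟨w, hw⟩ := h
  obtain ⟨s, t, hst⟩ := Z2i.coords w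
  have hz : z = Z2i.of (1 + 4*(t-s)) + Z2i.of (-(4*(s+t))) * Z2i.i := by
    have h1 : z = 1 + (1 + Z2i.i)^5 * (Z2i.of s + Z2i.of t * Z2i.i) := by
      rw [← hst, ← hw]; ring
    rw [h1]
    simp only [map_add, map_mul, map_sub, map_neg, map_one, map_ofNat]
    linear_combination (-4*(Z2i.of t) + 5*(Z2i.of s) + (5*(Z2i.of t) + 9*(Z2i.of s))*Z2i.i
      + (9*(Z2i.of t) + 5*(Z2i.of s))*Z2i.i^2 + (5*(Z2i.of t) + (Z2i.of s))*Z2i.i^3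
      + (Z2i.of t)*Z2i.i^4) * hi
  obtain ⟨r, hr, hr4⟩ := Zp2.exists_sqrt ((1+4*(t-s))*(1+4*(t-s)) + (-(4*(s+t)))*(-(4*(s+t))))
      ⟨(t-s) + 2*(t-s)*(t-s) + 2*(s+t)*(s+t), by ring⟩
  obtain ⟨hh, hhh⟩ := hr4
  have h8 : (8:ℤ_[2]) ≠ 0 := by norm_num
  have h4 : (4:ℤ_[2]) ≠ 0 := by norm_num
  have hh' : hh = (t-s) + 2*((t-s)*(t-s) + (s+t)*(s+t) - hh*hh) := by
    apply mul_left_cancel₀ h8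
    linear_combination hr - (r + 1 + 4*hh) * hhh
  have hA : (8:ℤ_[2]) ∣ (-(4*(s+t)) + r) - 1 :=
    ⟨((t-s)*(t-s) + (s+t)*(s+t) - hh*hh) - s, by linear_combination hhh + 4*hh'⟩
  obtain ⟨a, haA, ha4⟩ := Zp2.exists_sqrt _ hA
  obtain ⟨k, hk⟩ := ha4
  have hua : IsUnit a := by
    by_contra hn
    rw [PadicInt.not_isUnit_iff, PadicInt.norm_lt_one_iff_dvd] at hn
    obtain ⟨m, hm⟩ : (2:ℤ_[2]) ∣ a := by simpa using hn
    exact Zp2.two_not_dvd_one ⟨m - 2*k, by linear_combination hm - hk⟩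
  have ha0 : a ≠ 0 := hua.ne_zero
  obtain ⟨A', hA'⟩ := hua
  obtain ⟨b, hbdef⟩ : ∃ b : ℤ_[2], b = (↑A'⁻¹ : ℤ_[2]) * (1 + 4*(t-s)) := ⟨_, rfl⟩
  have hab : a * b = 1 + 4*(t-s) := by
    rw [hbdef, ← hA', ← mul_assoc, Units.mul_inv, one_mul]
  have hdiff : a*a - b*b = 2*(-(4*(s+t))) := by
    apply mul_left_cancel₀ (mul_ne_zero ha0 ha0)
    linear_combination (a*a - (-(4*(s+t))) + r) * haA - (a*b + (1+4*(t-s))) * hab + hr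
  obtain ⟨p, hpdef⟩ : ∃ p : ℤ_[2], p = 1 + 2*k + 2*(t-s) - 2*(b*k) := ⟨_, rfl⟩
  obtain ⟨q, hqdef⟩ : ∃ q : ℤ_[2], q = 2*k - 2*(t-s) + 2*(b*k) := ⟨_, rfl⟩
  have hsum : a + b = 2*p := by linear_combination (1 - b)*hk + hab - 2*hpdef
  have hdif : a - b = 2*q := by linear_combination (1 + b)*hk - hab - 2*hqdef
  have h1 : p*p - q*q = 1 + 4*(t-s) := by
    apply mul_left_cancel₀ h4
    linear_combination (-(a + b + 2*p))*hsum + (a - b + 2*q)*hdif + 4*hab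
  have h2 : 2*(p*q) = -(4*(s+t)) := by
    apply mul_left_cancel₀ h4
    linear_combination (-2*(a - b))*hsum - 4*p*hdif + 2*hdiff
  refine ⟨Z2i.of p + Z2i.of q * Z2i.i, ?_⟩
  rw [hz]
  simp only [map_add, map_mul, map_sub, map_neg, map_one, map_ofNat]
  have E1 := congrArg Z2i.of h1
  have E2 := congrArg Z2i.of h2
  simp only [map_add, map_mul, map_sub, map_neg, map_one, map_ofNat] at E1 E2
  linear_combination E1 + Z2i.i * E2 + (Z2i.of q * Z2i.of q) * hi

lemma Z2i.mem5 {x : Z2i} : x ∈ Z2i.m ^ 5 ↔ (1 + Z2i.i)^5 ∣ x := by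
  rw [show Z2i.m ^ 5 = Ideal.span {(1 + Z2i.i)^5} from by rw [Ideal.span_singleton_pow],
    Ideal.mem_span_singleton]

/-- `U² = {±1}·U⁽⁵⁾`: a unit `u` of `ℤ₂[i]` is a square (in the unit group)
iff `u ≡ ±1 (mod 𝔪⁵)` where `𝔪 = (1+i)`. -/
theorem unit_isSquare_iff (u : Z2iˣ) :
    IsSquare u ↔ ((u : Z2i) - 1 ∈ Z2i.m ^ 5 ∨ (u : Z2i) + 1 ∈ Z2i.m ^ 5) := by
  constructor
  · rintro ⟨w, hw⟩
    have hi := Z2i.i_sq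
    have hcoe : (↑u : Z2i) = ↑w * ↑w := by rw [hw, Units.val_mul]
    obtain ⟨a, b, habw⟩ := Z2i.coords (↑w : Z2i)
    obtain ⟨cc, d, hcdw⟩ := Z2i.coords (↑(w⁻¹) : Z2i)
    have hmul : (Z2i.of a + Z2i.of b * Z2i.i) * (Z2i.of cc + Z2i.of d * Z2i.i) = 1 := by
      rw [← habw, ← hcdw, ← Units.val_mul, mul_inv_cancel, Units.val_one]
    have hkey : Z2i.of (a*cc - b*d - 1) + Z2i.of (a*d + b*cc) * Z2i.i = 0 := by
      simp only [map_add, map_mul, map_sub, map_one]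
      linear_combination hmul - (Z2i.of b * Z2i.of d) * hi
    obtain ⟨hE1, hE2⟩ := Z2i.indep hkey
    have E1 : a*cc - b*d = 1 := by linear_combination hE1
    have E2 : a*d + b*cc = 0 := hE2
    rcases Zp2.parity a with ⟨a0, ha0⟩ | ⟨α, hα⟩ <;>
      rcases Zp2.parity b with ⟨c0, hc0⟩ | ⟨β, hβ⟩
    · exact absurd ⟨a0*cc - c0*d, by linear_combination -E1 + cc*ha0 - d*hc0⟩
        Zp2.two_not_dvd_one
    · -- a even, b odd : u ≡ -1
      right
      rw [Z2i.mem5]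
      obtain ⟨γ, hγ⟩ := Zp2.even_helper a0
      obtain ⟨δ, hδ⟩ := Zp2.even_helper β
      refine ⟨Z2i.of (-(β*a0) - γ + δ) + Z2i.of (-(β*a0) - γ - δ + a0*a0) * Z2i.i, ?_⟩
      rw [hcoe, habw]
      have Ha := congrArg Z2i.of ha0
      have Hb := congrArg Z2i.of (show b = 1 + 2*β by linear_combination hβ)
      have Hγ := congrArg Z2i.of hγ
      have Hδ := congrArg Z2i.of hδ
      simp only [map_add, map_mul, map_sub, map_neg, map_one, map_ofNat] at Ha Hb Hγ Hδ ⊢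
      rw [Ha, Hb]
      linear_combination (1 - 9*(Z2i.of δ) + (Z2i.of γ) + 4*(Z2i.of a0)*(Z2i.of a0)
          + 4*(Z2i.of β) + (Z2i.of β)*(Z2i.of a0) + 4*(Z2i.of β)*(Z2i.of β)
          + (-4*(Z2i.of δ) + 14*(Z2i.of γ) - 5*(Z2i.of a0)*(Z2i.of a0)
            + 14*(Z2i.of β)*(Z2i.of a0))*Z2i.i
          + (4*(Z2i.of δ) + 14*(Z2i.of γ) - 9*(Z2i.of a0)*(Z2i.of a0)
            + 14*(Z2i.of β)*(Z2i.of a0))*Z2i.i^2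
          + (4*(Z2i.of δ) + 6*(Z2i.of γ) - 5*(Z2i.of a0)*(Z2i.of a0)
            + 6*(Z2i.of β)*(Z2i.of a0))*Z2i.i^3
          + ((Z2i.of δ) + (Z2i.of γ) - (Z2i.of a0)*(Z2i.of a0)
            + (Z2i.of β)*(Z2i.of a0))*Z2i.i^4) * hi
        + (4*Z2i.i)*Hγ - 4*Hδ
    · -- a odd, b even : u ≡ 1
      left
      rw [Z2i.mem5]
      obtain ⟨γ, hγ⟩ := Zp2.even_helper (-c0)
      obtain ⟨δ, hδ⟩ := Zp2.even_helper α
      refine ⟨Z2i.of (γ - δ - α*c0) + Z2i.of (-c0 - α*c0 - γ + δ) * Z2i.i, ?_⟩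
      rw [hcoe, habw]
      have Ha := congrArg Z2i.of (show a = 1 + 2*α by linear_combination hα)
      have Hb := congrArg Z2i.of hc0
      have Hγ := congrArg Z2i.of hγ
      have Hδ := congrArg Z2i.of hδ
      simp only [map_add, map_mul, map_sub, map_neg, map_one, map_ofNat] at Ha Hb Hγ Hδ ⊢
      rw [Ha, Hb]
      linear_combination (9*(Z2i.of δ) - 9*(Z2i.of γ) - 4*(Z2i.of c0)
          + 4*(Z2i.of c0)*(Z2i.of c0) + (Z2i.of α)*(Z2i.of c0)
          + (4*(Z2i.of δ) - 4*(Z2i.of γ) + 5*(Z2i.of c0)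
            + 14*(Z2i.of α)*(Z2i.of c0))*Z2i.i
          + (-4*(Z2i.of δ) + 4*(Z2i.of γ) + 9*(Z2i.of c0)
            + 14*(Z2i.of α)*(Z2i.of c0))*Z2i.i^2
          + (-4*(Z2i.of δ) + 4*(Z2i.of γ) + 5*(Z2i.of c0)
            + 6*(Z2i.of α)*(Z2i.of c0))*Z2i.i^3
          + (-(Z2i.of δ) + (Z2i.of γ) + (Z2i.of c0)
            + (Z2i.of α)*(Z2i.of c0))*Z2i.i^4) * hi
        - 4*Hγ + 4*Hδ
    · exact absurd ⟨cc + α*cc - β*d + α*d + β*cc,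
        by linear_combination -E1 - E2 + (cc+d)*hα + (cc-d)*hβ⟩ Zp2.two_not_dvd_one
  · rintro (h | h)
    · obtain ⟨v, hv⟩ := Z2i.sq_of (↑u : Z2i) (Z2i.mem5.mp h)
      have huv : IsUnit v := isUnit_of_mul_isUnit_left (by rw [hv]; exact u.isUnit)
      obtain ⟨V, hV⟩ := huv
      exact ⟨V, Units.ext (by rw [Units.val_mul, hV, hv])⟩
    · have hi := Z2i.i_sq
      obtain ⟨c, hc⟩ := Z2i.mem5.mp h
      obtain ⟨v, hv⟩ := Z2i.sq_of (-(↑u : Z2i)) ⟨-c, by linear_combination -hc⟩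
      have hvi : (v * Z2i.i) * (v * Z2i.i) = (↑u : Z2i) := by
        linear_combination Z2i.i^2 * hv - (↑u : Z2i) * hi
      have huv : IsUnit (v * Z2i.i) := isUnit_of_mul_isUnit_left (by rw [hvi]; exact u.isUnit)
      obtain ⟨V, hV⟩ := huv
      exact ⟨V, Units.ext (by rw [Units.val_mul, hV, hvi])⟩
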